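/- Let G = (V,E) be a finite simple graph and p ∈ [0,1]^V lie in the Shearer set of G. Then every BRF Z in the weak dependency class C_w^G(p) satisfies, for every W ⊆ V, P(Z_v = 1 for all v ∈ W) ≥ Ξ_{G[W]}(p) ≥ 0. -/

import Mathlib

open MeasureTheory Finset
open scoped Classical

/-- The critical function Ξ_{G[W]}(p). -/
noncomputable def Xi {V : Type*} (G : SimpleGraph V) (W : Finset V) (p : V → ℝ) : ℝ :=
  ∑ T ∈ W.powerset,
    if ∀ u ∈ T, ∀ w ∈ T, ¬ G.Adj u w then ∏ v ∈ T, -(1 - p v) else 0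

/-- Cylinder event. -/
def cylEvt {V : Type*} (S : Finset V) (s : V → Bool) : Set (V → Bool) :=
  {ω | ∀ v ∈ S, ω v = s v}

def WeakDep {V : Type*} (G : SimpleGraph V) (p : V → ℝ)
    (μ : Measure (V → Bool)) : Prop :=
  IsProbabilityMeasure μ ∧
  ∀ (v : V) (S : Finset V), (∀ w ∈ S, w ≠ v ∧ ¬ G.Adj v w) →
    ∀ s : V → Bool, 0 < (μ (cylEvt S s)).toReal →
      p v ≤ (μ ({ω | ω v = true} ∩ cylEvt S s)).toReal / (μ (cylEvt S s)).toReal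

def StrongDep {V : Type*} (G : SimpleGraph V) (p : V → ℝ)
    (μ : Measure (V → Bool)) : Prop :=
  IsProbabilityMeasure μ ∧
  (∀ v : V, (μ {ω | ω v = true}).toReal = p v) ∧
  ∀ (S₁ S₂ : Finset V), (∀ u ∈ S₁, ∀ w ∈ S₂, u ≠ w ∧ ¬ G.Adj u w) →
    ∀ s₁ s₂ : V → Bool,
      μ (cylEvt S₁ s₁ ∩ cylEvt S₂ s₂) = μ (cylEvt S₁ s₁) * μ (cylEvt S₂ s₂)

/-- Expectation of f under product field π_c restricted to W. -/
noncomputable def prodExp {V : Type*} (c : V → ℝ) (W : Finset V)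
    (f : (W → Bool) → ℝ) : ℝ :=
  ∑ s : W → Bool, (∏ v : W, if s v then c v.1 else 1 - c v.1) * f s

/-- μ stochastically dominates the Bernoulli product field π_c. -/
def DomProd {V : Type*} (μ : Measure (V → Bool)) (c : V → ℝ) : Prop :=
  ∀ (W : Finset V) (f : (W → Bool) → ℝ), Monotone f →
    prodExp c W f ≤ ∫ ω, f (fun v => ω v.1) ∂μ

/-- ν is the Bernoulli product field π_c. -/
def IsProduct {V : Type*} (c : V → ℝ) (μ : Measure (V → Bool)) : Prop :=
  IsProbabilityMeasure μ ∧
  ∀ (S : Finset V) (s : V → Bool),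
    μ (cylEvt S s) = ∏ v ∈ S, ENNReal.ofReal (if s v then c v else 1 - c v)

/-- μ is Shearer's measure μ_{G,p}. -/
def IsShearer {V : Type*} [Fintype V] (G : SimpleGraph V) (p : V → ℝ)
    (μ : Measure (V → Bool)) : Prop :=
  IsProbabilityMeasure μ ∧
  ∀ W : Finset V,
    (μ {ω | ∀ v, (ω v = false ↔ v ∈ W)}).toReal =
      ∑ T ∈ (Finset.univ : Finset V).powerset,
        if W ⊆ T ∧ ∀ u ∈ T, ∀ w ∈ T, ¬ G.Adj u w
        then (-1 : ℝ) ^ (T.card - W.card) * ∏ v ∈ T, (1 - p v) else 0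

lemma Xi_empty {V : Type*} (G : SimpleGraph V) (p : V → ℝ) : Xi G ∅ p = 1 := by
  simp [Xi]

lemma Xi_identity {V : Type*} (G : SimpleGraph V) (p : V → ℝ) {W : Finset V} {v : V}
    (hv : v ∈ W) :
    Xi G W p = Xi G (W.erase v) p
      - (1 - p v) * Xi G ((W.erase v).filter (fun w => ¬ G.Adj v w)) p := by
  set W' := W.erase v with hW'
  set W'' := W'.filter (fun w => ¬ G.Adj v w) with hW''
  have hvW' : v ∉ W' := notMem_erase v W
  have hsplit : Xi G W p = Xi G W' p
      + ∑ T ∈ W'.powerset,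
          (if ∀ u ∈ insert v T, ∀ w ∈ insert v T, ¬ G.Adj u w
            then ∏ u ∈ insert v T, -(1 - p u) else 0) := by
    unfold Xi
    rw [← Finset.insert_erase hv, Finset.sum_powerset_insert hvW']
  rw [hsplit]
  have hstep : ∀ T ∈ W'.powerset,
      (if ∀ u ∈ insert v T, ∀ w ∈ insert v T, ¬ G.Adj u w
        then ∏ u ∈ insert v T, -(1 - p u) else 0)
      = (if T ⊆ W'' ∧ ∀ u ∈ T, ∀ w ∈ T, ¬ G.Adj u w
          then -(1 - p v) * ∏ u ∈ T, -(1 - p u) else 0) := by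
    intro T hT
    rw [Finset.mem_powerset] at hT
    have hvT : v ∉ T := fun h => hvW' (hT h)
    have hiff : (∀ u ∈ insert v T, ∀ w ∈ insert v T, ¬ G.Adj u w)
        ↔ (T ⊆ W'' ∧ ∀ u ∈ T, ∀ w ∈ T, ¬ G.Adj u w) := by
      constructor
      · intro h
        refine ⟨fun w hw => ?_, fun u hu w hw => h u (mem_insert_of_mem hu) w (mem_insert_of_mem hw)⟩
        rw [hW'', mem_filter]
        exact ⟨hT hw, h v (mem_insert_self v T) w (mem_insert_of_mem hw)⟩
      · rintro ⟨hsub, hind⟩ u hu w hw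
        rcases mem_insert.mp hu with h1 | h1
        · rcases mem_insert.mp hw with h2 | h2
          · subst h1; subst h2; exact G.loopless.irrefl _
          · subst h1; exact (mem_filter.mp (hsub h2)).2
        · rcases mem_insert.mp hw with h2 | h2
          · subst h2
            intro hadj
            exact (mem_filter.mp (hsub h1)).2 hadj.symm
          · exact hind u h1 w h2
    rw [if_congr hiff rfl rfl, Finset.prod_insert hvT]
  rw [Finset.sum_congr rfl hstep]
  have hsub : W''.powerset ⊆ W'.powerset :=
    Finset.powerset_mono.mpr (Finset.filter_subset _ _)
  rw [← Finset.sum_subset hsub (by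
    intro T hT hT'
    rw [Finset.mem_powerset] at hT'
    simp [hT'])]
  have : ∀ T ∈ W''.powerset,
      (if T ⊆ W'' ∧ ∀ u ∈ T, ∀ w ∈ T, ¬ G.Adj u w
        then -(1 - p v) * ∏ u ∈ T, -(1 - p u) else 0)
      = -(1 - p v) * (if ∀ u ∈ T, ∀ w ∈ T, ¬ G.Adj u w then ∏ u ∈ T, -(1 - p u) else 0) := by
    intro T hT
    rw [Finset.mem_powerset] at hT
    by_cases h : ∀ u ∈ T, ∀ w ∈ T, ¬ G.Adj u w
    · simp [h, hT]
    · simp [h]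
  rw [Finset.sum_congr rfl this, ← Finset.mul_sum]
  unfold Xi
  ring

lemma meas_evt {V : Type*} (v : V) (b : Bool) :
    MeasurableSet {ω : V → Bool | ω v = b} := by
  have : {ω : V → Bool | ω v = b} = (fun ω : V → Bool => ω v) ⁻¹' {b} := by
    ext ω; simp
  rw [this]
  exact measurable_pi_apply v (measurableSet_singleton b)

lemma meas_cyl {V : Type*} (S : Finset V) (s : V → Bool) :
    MeasurableSet (cylEvt S s) := by
  have : cylEvt S s = ⋂ v ∈ (S : Set V), {ω : V → Bool | ω v = s v} := by
    ext ω; simp [cylEvt]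
  rw [this]
  exact MeasurableSet.biInter S.countable_toSet (fun v _ => meas_evt v (s v))


/-- Shearer's measure is a uniform minorant for open events. -/
theorem stmt2 {V : Type*} [Fintype V] (G : SimpleGraph V) (p : V → ℝ)
    (hp : ∀ v, p v ∈ Set.Icc (0:ℝ) 1)
    (hShearer : ∀ W : Finset V, 0 ≤ Xi G W p)
    (μ : Measure (V → Bool)) (hμ : WeakDep G p μ) :
    ∀ W : Finset V,
      Xi G W p ≤ (μ (cylEvt W (fun _ => true))).toReal ∧ 0 ≤ Xi G W p := by
  obtain ⟨hprob, hweak⟩ := hμ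
  set m : Finset V → ℝ := fun S => (μ (cylEvt S (fun _ => true))).toReal with hm
  have m_nonneg : ∀ S, 0 ≤ m S := fun S => ENNReal.toReal_nonneg
  have m_anti : ∀ {U W : Finset V}, U ⊆ W → m W ≤ m U := by
    intro U W h
    refine ENNReal.toReal_mono (measure_ne_top μ _) (measure_mono ?_)
    intro ω hω v hv
    exact hω v (h hv)
  have m_empty : m ∅ = 1 := by
    have h0 : cylEvt (∅ : Finset V) (fun _ => true) = Set.univ := by
      ext ω; simp [cylEvt]
    simp [hm, h0]
  have key : ∀ (W : Finset V) (v : V), v ∈ W →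
      m (W.erase v) - (1 - p v) * m ((W.erase v).filter (fun w => ¬ G.Adj v w)) ≤ m W := by
    intro W v hv
    set A : Set (V → Bool) := {ω | ω v = true} with hA
    set W' := W.erase v with hW'
    set W'' := W'.filter (fun w => ¬ G.Adj v w) with hW''
    set C' := cylEvt W' (fun _ => true) with hC'
    set C'' := cylEvt W'' (fun _ => true) with hC''
    have hAm : MeasurableSet A := meas_evt v true
    have hsplit : cylEvt W (fun _ => true) = C' ∩ A := by
      ext ω
      constructor
      · intro h
        exact ⟨fun u hu => h u (mem_of_mem_erase hu), h v hv⟩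
      · rintro ⟨h2, h1⟩ u hu
        by_cases huv : u = v
        · subst huv; exact h1
        · exact h2 u (mem_erase.mpr ⟨huv, hu⟩)
    have hsub : C' ⊆ C'' := by
      intro ω hω u hu
      exact hω u (mem_filter.mp hu).1
    -- decompositions
    have hdec : ∀ C : Set (V → Bool),
        (μ C).toReal = (μ (C ∩ A)).toReal + (μ (C \ A)).toReal := by
      intro C
      rw [← ENNReal.toReal_add (measure_ne_top μ _) (measure_ne_top μ _),
        measure_inter_add_diff C hAm]
    have h1 : m W = m W' - (μ (C' \ A)).toReal := by
      have := hdec C'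
      have hmW : m W = (μ (C' ∩ A)).toReal := by rw [hm]; simp only; rw [hsplit]
      rw [hmW]
      linarith [this]
    have h2 : (μ (C' \ A)).toReal ≤ (μ (C'' \ A)).toReal :=
      ENNReal.toReal_mono (measure_ne_top μ _) (measure_mono (Set.diff_subset_diff_left hsub))
    have h3 : (μ (C'' \ A)).toReal ≤ (1 - p v) * m W'' := by
      rcases eq_or_lt_of_le (m_nonneg W'') with h0 | h0
      · have hub : (μ (C'' \ A)).toReal ≤ m W'' :=
          ENNReal.toReal_mono (measure_ne_top μ _) (measure_mono Set.diff_subset)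
        have hz : (1 - p v) * m W'' = 0 := by rw [← h0]; ring
        linarith
      · have hcond : ∀ w ∈ W'', w ≠ v ∧ ¬ G.Adj v w := by
          intro w hw
          rcases mem_filter.mp hw with ⟨hw1, hw2⟩
          exact ⟨(mem_erase.mp hw1).1, hw2⟩
        have := hweak v W'' hcond (fun _ => true) h0
        have hineq : p v * m W'' ≤ (μ (A ∩ C'')).toReal := by
          rw [le_div_iff₀ h0] at this
          exact this
        have := hdec C''
        rw [Set.inter_comm] at hineq
        linarith
    linarith
  have main : ∀ n (W : Finset V), W.card ≤ n →
      ∀ U ⊆ W, Xi G W p * m U ≤ Xi G U p * m W := by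
    intro n
    induction n with
    | zero =>
      intro W hW U hU
      have hWe : W = ∅ := Finset.card_eq_zero.mp (Nat.le_zero.mp hW)
      subst hWe
      rw [Finset.subset_empty.mp hU]
    | succ n ih =>
      intro W hW U hU
      by_cases hUW : U = W
      · subst hUW
        exact le_rfl
      · obtain ⟨v, hvW, hvU⟩ := Finset.exists_of_ssubset (lt_of_le_of_ne hU hUW)
        set W' := W.erase v with hW'def
        set W'' := W'.filter (fun w => ¬ G.Adj v w) with hW''def
        have hU' : U ⊆ W' := fun x hx => mem_erase.mpr ⟨fun h => hvU (h ▸ hx), hU hx⟩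
        have hcard : W'.card ≤ n := by
          rw [hW'def, Finset.card_erase_of_mem hvW]
          omega
        have ih1 := ih W' hcard U hU'
        have ih2 := ih W' hcard W'' (Finset.filter_subset _ _)
        have hXiW : Xi G W p = Xi G W' p - (1 - p v) * Xi G W'' p := Xi_identity G p hvW
        have hkey := key W v hvW
        rw [← hW'def, ← hW''def] at hkey
        have hpv : (0:ℝ) ≤ 1 - p v := by linarith [(hp v).2]
        have step : Xi G W p * m W' ≤ Xi G W' p * m W := by
          have e1 := mul_le_mul_of_nonneg_left ih2 hpv
          have e2 := mul_le_mul_of_nonneg_left hkey (hShearer W')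
          rw [hXiW]
          ring_nf at e1 e2 ⊢
          linarith [e1, e2]
        rcases eq_or_lt_of_le (hShearer W') with h0 | h0
        · have hXiW0 : Xi G W p = 0 := by
            have h2 := hShearer W''
            nlinarith [hShearer W]
          rw [hXiW0, zero_mul]
          exact mul_nonneg (hShearer U) (m_nonneg W)
        · have A : Xi G W' p * (Xi G W p * m U) ≤ Xi G W' p * (Xi G U p * m W) := by
            nlinarith [mul_le_mul_of_nonneg_left ih1 (hShearer W),
              mul_le_mul_of_nonneg_left step (hShearer U)]
          exact le_of_mul_le_mul_left A h0
  intro W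
  have hfin := main W.card W le_rfl ∅ (Finset.empty_subset W)
  rw [Xi_empty, m_empty, mul_one, one_mul] at hfin
  exact ⟨hfin, hShearer W⟩
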